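/- Let K be a complete discretely valued field (of characteristic 0 or p) with perfect residue field of characteristic p, and let L/K be a finite, totally ramified, Galois extension of degree p^n. Let π_L be a uniformizer of L with minimal polynomial p(x) over K, and set d = v_L(p'(π_L)). If ρ ∈ L satisfies v_L(ρ) ≡ −d − 1 (mod p^n), then the set {ρ} ∪ {π_L^i / p'(π_L) : i = 0, …, p^n − 2} is a K-basis of L; in particular L = K·ρ + Σ_{i=0}^{p^n−2} K·(π_L^i / p'(π_L)). -/

import Mathlib

/-- A normalized discrete valuation on a field `F` : an integer-valued function
(its value at `0` is irrelevant), additive on products of nonzero elements,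
satisfying the ultrametric inequality, and attaining the value `1`
(so `v (Fˣ) = ℤ`, i.e. it is normalized). -/
structure NormDiscVal (F : Type*) [Field F] where
  v : F → ℤ
  v_mul : ∀ x y : F, x ≠ 0 → y ≠ 0 → v (x * y) = v x + v y
  v_add : ∀ x y : F, x ≠ 0 → y ≠ 0 → x + y ≠ 0 → min (v x) (v y) ≤ v (x + y)
  exists_uniformizer : ∃ π : F, π ≠ 0 ∧ v π = 1

namespace NormDiscVal

variable {F : Type*} [Field F]

/-- `x` belongs to the fractional ideal `𝔓^j = {x | v x ≥ j}` (and `0` belongs to all). -/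
def memP (w : NormDiscVal F) (j : ℤ) (x : F) : Prop := x = 0 ∨ j ≤ w.v x

/-- `F` is complete with respect to the valuation `w` :
every Cauchy sequence (for the valuation) has a limit. -/
def IsComplete (w : NormDiscVal F) : Prop :=
  ∀ a : ℕ → F,
    (∀ N : ℤ, ∃ M : ℕ, ∀ m k : ℕ, M ≤ m → M ≤ k → w.memP N (a m - a k)) →
    ∃ l : F, ∀ N : ℤ, ∃ M : ℕ, ∀ m : ℕ, M ≤ m → w.memP N (a m - l)

/-- The residue field of `w` has characteristic `p` and is perfect :
`p` vanishes in the residue field and the Frobenius is surjective on it. -/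
def PerfectResidueCharP (w : NormDiscVal F) (p : ℕ) : Prop :=
  w.memP 1 (p : F) ∧
    ∀ x : F, w.memP 0 x → ∃ y : F, w.memP 0 y ∧ w.memP 1 (x - y ^ p)

variable (w : NormDiscVal F)

lemma v_one' : w.v 1 = 0 := by
  have := w.v_mul 1 1 one_ne_zero one_ne_zero
  simp at this; omega

lemma v_neg' (x : F) (hx : x ≠ 0) : w.v (-x) = w.v x := by
  have h1 : w.v (-1 : F) = 0 := by
    have := w.v_mul (-1) (-1) (by norm_num) (by norm_num)
    simp [w.v_one'] at this; omega
  have := w.v_mul (-1) x (by norm_num) hx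
  rw [neg_one_mul, h1] at this; omega

lemma v_inv' (x : F) (hx : x ≠ 0) : w.v x⁻¹ = - w.v x := by
  have := w.v_mul x x⁻¹ hx (inv_ne_zero hx)
  rw [mul_inv_cancel₀ hx, w.v_one'] at this; omega

lemma v_pow' (x : F) (hx : x ≠ 0) (k : ℕ) : w.v (x ^ k) = k * w.v x := by
  induction k with
  | zero => simpa using w.v_one'
  | succ m ih =>
    rw [pow_succ, w.v_mul _ _ (pow_ne_zero _ hx) hx, ih]; push_cast; ring

lemma v_add_eq_min' (x y : F) (hx : x ≠ 0) (hy : y ≠ 0) (hne : w.v x ≠ w.v y) :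
    x + y ≠ 0 ∧ w.v (x + y) = min (w.v x) (w.v y) := by
  have hxy : x + y ≠ 0 := by
    intro h
    have : y = -x := by linear_combination h
    rw [this, w.v_neg' x hx] at hne; exact hne rfl
  refine ⟨hxy, ?_⟩
  have hmin := w.v_add x y hx hy hxy
  rcases lt_or_gt_of_ne hne with h | h
  · have : min (w.v (x+y)) (w.v (-y)) ≤ w.v x := by
      have := w.v_add (x+y) (-y) hxy (neg_ne_zero.2 hy) (by simpa using hx)
      simpa using this
    rw [w.v_neg' y hy] at this; omega
  · have : min (w.v (x+y)) (w.v (-x)) ≤ w.v y := by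
      have := w.v_add (x+y) (-x) hxy (neg_ne_zero.2 hx) (by
        have : x + y + -x = y := by ring
        rw [this]; exact hy)
      have e : x + y + -x = y := by ring
      rwa [e] at this
    rw [w.v_neg' x hx] at this; omega

lemma val_sum' {ι : Type*} [DecidableEq ι] (s : Finset ι) (f : ι → F)
    (hne : s.Nonempty) (h0 : ∀ i ∈ s, f i ≠ 0)
    (hd : ∀ i ∈ s, ∀ j ∈ s, w.v (f i) = w.v (f j) → i = j) :
    (∑ i ∈ s, f i) ≠ 0 ∧
      ∃ i ∈ s, w.v (∑ i ∈ s, f i) = w.v (f i) := by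
  classical
  induction s using Finset.cons_induction with
  | empty => simp at hne
  | cons a s ha ih =>
    have hfa : f a ≠ 0 := h0 a (Finset.mem_cons_self a s)
    rcases s.eq_empty_or_nonempty with hs | hs
    · subst hs; simp [hfa]
    · obtain ⟨hsum, i0, hi0, hvi0⟩ := ih hs
        (fun i hi => h0 i (Finset.mem_cons_of_mem hi))
        (fun i hi j hj h => hd i (Finset.mem_cons_of_mem hi) j (Finset.mem_cons_of_mem hj) h)
      have hvne : w.v (f a) ≠ w.v (∑ i ∈ s, f i) := by
        rw [hvi0]
        intro h
        exact ha (hd a (Finset.mem_cons_self a s) i0 (Finset.mem_cons_of_mem hi0) h ▸ hi0)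
      rw [Finset.sum_cons]
      obtain ⟨h1, h2⟩ := w.v_add_eq_min' (f a) (∑ i ∈ s, f i) hfa hsum hvne
      refine ⟨h1, ?_⟩
      rcases le_total (w.v (f a)) (w.v (∑ i ∈ s, f i)) with h | h
      · exact ⟨a, Finset.mem_cons_self a s, by omega⟩
      · exact ⟨i0, Finset.mem_cons_of_mem hi0, by omega⟩

end NormDiscVal

open Polynomial

/-- **An adapted field basis.**  Let `K` be a complete discretely valued field
(characteristic `0` or `p`) with perfect residue field of characteristic `p`,
and `L/K` a finite, totally ramified, Galois extension of degree `p ^ n`.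
With `d = v_L(p'(πL))`, if `v_L(ρ) ≡ −d − 1 (mod p ^ n)` then the family
`{ρ} ∪ {πL^i / p'(πL) : 0 ≤ i ≤ p^n − 2}` is a `K`-basis of `L`; in
particular `L = K·ρ + ∑_{i=0}^{p^n−2} K · πL^i / p'(πL)`. -/
theorem alternate_basis_of_critical_valuation
    {p : ℕ} (hp : p.Prime) {K L : Type*} [Field K] [Field L] [Algebra K L]
    (hchar : ringChar K = 0 ∨ ringChar K = p)
    (vK : NormDiscVal K) (hKcompl : vK.IsComplete)
    (hKres : vK.PerfectResidueCharP p)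
    [FiniteDimensional K L] [IsGalois K L]
    (n : ℕ) (hdeg : Module.finrank K L = p ^ n)
    (vL : NormDiscVal L)
    (htotram : ∀ x : K, x ≠ 0 → vL.v (algebraMap K L x) = (p ^ n : ℤ) * vK.v x)
    (πL : L) (hπL : πL ≠ 0 ∧ vL.v πL = 1)
    (D : L) (hD : D = aeval πL (derivative (minpoly K πL)))
    (ρ : L) (hρ : ρ ≠ 0)
    (hval : Int.ModEq ((p : ℤ) ^ n) (vL.v ρ) (-vL.v D - 1)) :
    LinearIndependent K
        (fun j : Fin (p ^ n) => if (j : ℕ) = p ^ n - 1 then ρ else πL ^ (j : ℕ) / D) ∧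
      Submodule.span K
        (Set.range fun j : Fin (p ^ n) =>
          if (j : ℕ) = p ^ n - 1 then ρ else πL ^ (j : ℕ) / D) = ⊤ := by
  classical
  have hpn : 0 < p ^ n := pow_pos hp.pos n
  haveI : Nonempty (Fin (p ^ n)) := ⟨⟨0, hpn⟩⟩
  obtain ⟨hπ, hvπ⟩ := hπL
  -- D ≠ 0
  have hD0 : D ≠ 0 := by
    have hsep : (minpoly K πL).Separable := Algebra.IsSeparable.isSeparable K πL
    obtain ⟨a, b, hab⟩ := hsep
    intro h0
    have := congrArg (aeval πL) hab
    simp [minpoly.aeval, hD ▸ h0] at this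
  set g : Fin (p ^ n) → L := fun i => πL ^ (i : ℕ) / D with hg
  have hg0 : ∀ i, g i ≠ 0 := fun i => div_ne_zero (pow_ne_zero _ hπ) hD0
  have hvalg : ∀ (c : K) (i : Fin (p ^ n)), c ≠ 0 →
      c • g i ≠ 0 ∧ vL.v (c • g i) = (p ^ n : ℤ) * vK.v c + (i : ℤ) - vL.v D := by
    intro c i hc
    have hac : algebraMap K L c ≠ 0 := by
      simpa using (map_ne_zero (algebraMap K L)).2 hc
    have h1 : c • g i = algebraMap K L c * (πL ^ (i : ℕ) * D⁻¹) := by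
      simp only [Algebra.smul_def, hg, div_eq_mul_inv]
    have hne : c • g i ≠ 0 := smul_ne_zero hc (hg0 i)
    refine ⟨hne, ?_⟩
    rw [h1, vL.v_mul _ _ hac (mul_ne_zero (pow_ne_zero _ hπ) (inv_ne_zero hD0)),
      vL.v_mul _ _ (pow_ne_zero _ hπ) (inv_ne_zero hD0), vL.v_pow' _ hπ, vL.v_inv' _ hD0,
      htotram c hc, hvπ]
    ring
  -- key lemma : a nontrivial combination of the `g i` is nonzero and its
  -- valuation is attained at some nonzero coefficient
  have key : ∀ c : Fin (p ^ n) → K, (∃ i, c i ≠ 0) →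
      (∑ i, c i • g i) ≠ 0 ∧ ∃ i0, c i0 ≠ 0 ∧
        vL.v (∑ i, c i • g i) = (p ^ n : ℤ) * vK.v (c i0) + (i0 : ℤ) - vL.v D := by
    intro c hc
    set s : Finset (Fin (p ^ n)) := Finset.univ.filter (fun i => c i ≠ 0) with hs
    have hmem : ∀ i, i ∈ s ↔ c i ≠ 0 := by intro i; simp [hs]
    have hsne : s.Nonempty := by obtain ⟨i, hi⟩ := hc; exact ⟨i, (hmem i).2 hi⟩
    have hsum : ∑ i, c i • g i = ∑ i ∈ s, c i • g i := by
      rw [eq_comm]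
      apply Finset.sum_subset (Finset.subset_univ s)
      intro x _ hx
      have : c x = 0 := by by_contra h; exact hx ((hmem x).2 h)
      simp [this]
    obtain ⟨h1, i0, hi0, h2⟩ := vL.val_sum' s (fun i => c i • g i) hsne
      (fun i hi => (hvalg (c i) i ((hmem i).1 hi)).1)
      (by
        intro i hi j hj hvij
        have ei := (hvalg (c i) i ((hmem i).1 hi)).2
        have ej := (hvalg (c j) j ((hmem j).1 hj)).2
        try simp only at hvij
        rw [ei, ej] at hvij
        have hdvd : ((p : ℤ) ^ n) ∣ ((j : ℤ) - (i : ℤ)) :=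
          ⟨vK.v (c i) - vK.v (c j), by push_cast at hvij ⊢; linarith⟩
        have hib : (i : ℕ) < p ^ n := i.isLt
        have hjb : (j : ℕ) < p ^ n := j.isLt
        have hz : (j : ℤ) - (i : ℤ) = 0 := by
          refine Int.eq_zero_of_dvd_of_natAbs_lt_natAbs hdvd ?_
          have : ((p : ℤ) ^ n).natAbs = p ^ n := by
            rw [Int.natAbs_pow]; simp
          omega
        have : (i : ℕ) = (j : ℕ) := by omega
        exact Fin.ext this)
    rw [hsum]
    refine ⟨h1, i0, (hmem i0).1 hi0, ?_⟩
    rw [h2]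
    exact (hvalg (c i0) i0 ((hmem i0).1 hi0)).2
  -- `g` is linearly independent, hence a basis
  have hli : LinearIndependent K g := by
    rw [Fintype.linearIndependent_iff]
    intro cc hcc i
    by_contra hi
    exact (key cc ⟨i, hi⟩).1 hcc
  have hcard : Fintype.card (Fin (p ^ n)) = Module.finrank K L := by simp [hdeg]
  let b : Module.Basis (Fin (p ^ n)) K L := basisOfLinearIndependentOfCardEqFinrank hli hcard
  have hb : ∀ i, b i = g i := fun i => by
    simp [b, coe_basisOfLinearIndependentOfCardEqFinrank]
  set c : Fin (p ^ n) → K := fun i => b.repr ρ i with hcdef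
  have hrep : ∑ i, c i • g i = ρ := by
    conv_rhs => rw [← b.sum_repr ρ]
    exact Finset.sum_congr rfl fun i _ => by rw [hb]
  have hcne : ∃ i, c i ≠ 0 := by
    by_contra h
    push_neg at h
    apply hρ
    rw [← hrep]
    simp [h]
  obtain ⟨-, i0, hci0, hvρ⟩ := key c hcne
  rw [hrep] at hvρ
  -- the distinguished index is the last one
  set lst : Fin (p ^ n) := ⟨p ^ n - 1, by omega⟩ with hlst
  have hi0lst : i0 = lst := by
    have hmod : Int.ModEq ((p : ℤ) ^ n) ((p ^ n : ℤ) * vK.v (c i0) + (i0 : ℤ) - vL.v D)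
        (-vL.v D - 1) := hvρ ▸ hval
    have hdvd := hmod.dvd
    have hdvd2 : ((p : ℤ) ^ n) ∣ ((i0 : ℤ) + 1) := by
      have h3 : ((p : ℤ) ^ n) ∣ ((p ^ n : ℤ) * vK.v (c i0)) := ⟨vK.v (c i0), by push_cast; ring⟩
      have he : (-vL.v D - 1) - ((p ^ n : ℤ) * vK.v (c i0) + (i0 : ℤ) - vL.v D)
          = -((i0 : ℤ) + 1) - (p ^ n : ℤ) * vK.v (c i0) := by push_cast; ring
      rw [he] at hdvd
      have h5 := dvd_add hdvd h3
      have h4 : -((i0 : ℤ) + 1) - (p ^ n : ℤ) * vK.v (c i0) + (p ^ n : ℤ) * vK.v (c i0)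
          = -((i0 : ℤ) + 1) := by ring
      rw [h4] at h5
      exact (dvd_neg.1 h5)
    have hle : (p : ℤ) ^ n ≤ (i0 : ℤ) + 1 := Int.le_of_dvd (by positivity) hdvd2
    have hib : (i0 : ℕ) < p ^ n := i0.isLt
    apply Fin.ext
    have hc1 : ((p : ℤ) ^ n) = ((p ^ n : ℕ) : ℤ) := by push_cast; ring
    simp only [hlst]
    omega
  rw [hi0lst] at hci0
  -- the new family
  set f : Fin (p ^ n) → L := fun j => if (j : ℕ) = p ^ n - 1 then ρ else πL ^ (j : ℕ) / D with hf
  have hfj : ∀ j, j ≠ lst → f j = g j := by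
    intro j hj
    have : (j : ℕ) ≠ p ^ n - 1 := fun h => hj (Fin.ext (by simp [hlst, h]))
    simp [hf, this, hg]
  have hflst : f lst = ρ := by simp [hf, hlst]
  constructor
  · -- linear independence
    rw [Fintype.linearIndependent_iff]
    intro a ha
    have halst : a lst = 0 := by
      have h := congrArg (fun x => (b.repr x) lst) ha
      simp only [map_sum, map_smul, Finsupp.coe_finset_sum, Finset.sum_apply,
        Finsupp.smul_apply, smul_eq_mul, map_zero, Finsupp.coe_zero, Pi.zero_apply] at h
      rw [Finset.sum_eq_single lst] at h
      · rw [hflst] at h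
        have : a lst * c lst = 0 := h
        exact (mul_eq_zero.1 this).resolve_right hci0
      · intro i _ hi
        rw [hfj i hi, ← hb i, b.repr_self, Finsupp.single_apply, if_neg hi, mul_zero]
      · intro h'; exact absurd (Finset.mem_univ lst) h'
    have hag : ∑ i, a i • g i = 0 := by
      rw [← ha]
      refine Finset.sum_congr rfl fun i _ => ?_
      by_cases hi : i = lst
      · subst hi; rw [halst]; simp
      · rw [hfj i hi]
    have := Fintype.linearIndependent_iff.1 hli a hag
    intro j
    exact this j
  · -- spanning
    rw [eq_top_iff, ← b.span_eq]
    refine Submodule.span_le.2 ?_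
    rintro x ⟨i, rfl⟩
    by_cases hi : i = lst
    · subst hi
      -- b lst = (c lst)⁻¹ • (ρ - ∑ over erase lst)
      have hsplit : c lst • b lst = ρ - ∑ i ∈ Finset.univ.erase lst, c i • b i := by
        have h := Finset.add_sum_erase Finset.univ (fun i => c i • b i) (Finset.mem_univ lst)
        have h2 : ∑ i, c i • b i = ρ := by
          rw [← hrep]; exact Finset.sum_congr rfl fun i _ => by rw [hb]
        rw [h2] at h
        linear_combination (h : _)
      have hbl : b lst = (c lst)⁻¹ • (ρ - ∑ i ∈ Finset.univ.erase lst, c i • b i) := by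
        rw [← hsplit, smul_smul, inv_mul_cancel₀ hci0, one_smul]
      rw [hbl]
      refine Submodule.smul_mem _ _ (Submodule.sub_mem _ ?_ ?_)
      · exact Submodule.subset_span ⟨lst, hflst⟩
      · refine Submodule.sum_mem _ fun i hi => ?_
        have hine : i ≠ lst := (Finset.mem_erase.1 hi).1
        refine Submodule.smul_mem _ _ (Submodule.subset_span ⟨i, ?_⟩)
        rw [hfj i hine, ← hb i]
    · exact Submodule.subset_span ⟨i, by rw [hfj i hi, ← hb i]⟩
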